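/- Let K be an algebraically closed field of characteristic p > 0, n ≥ 1, and c_0,…,c_n ∈ K with c_0 ≠ 0 and c_n ≠ 0. Let z_1,…,z_n be an 𝔽_p-basis of the set of roots in K of P(X) = c_0·X^{p^n} + c_1·X^{p^{n-1}} + ⋯ + c_n·X (this root set is an 𝔽_p-vector space of dimension n, since the linear coefficient c_n is nonzero). Then a sequence x : ℕ → K satisfies the reversed linear recurrence c_0·x_k^{p^n} + c_1·x_{k+1}^{p^{n-1}} + ⋯ + c_n·x_{k+n} = 0 for every k ≥ 0 if and only if there exist λ_1,…,λ_n ∈ K such that for every k ≥ 0 one has x_k = z_1·λ_1^{p^k} + ⋯ + z_n·λ_n^{p^k}. -/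

import Mathlib

open Polynomial

section Helpers
variable {K : Type*} [Field K] {p : ℕ} [Fact p.Prime] [CharP K p]

lemma aux_cast_pow (a : ZMod p) (e : ℕ) : ((a.val : K)) ^ p ^ e = (a.val : K) := by
  have h : ((a.val : K)) = ZMod.castHom (dvd_refl p) K a := by
    simp [ZMod.natCast_val]
  rw [h, ← map_pow, ZMod.pow_card_pow]

lemma aux_sum_pow {ι : Type*} (s : Finset ι) (e : ℕ) (g : ι → K) :
    (∑ j ∈ s, g j) ^ p ^ e = ∑ j ∈ s, (g j) ^ p ^ e := by
  have h := map_sum (iterateFrobenius K p e) g s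
  simp only [iterateFrobenius_def] at h
  exact h

lemma aux_pow_inj (m : ℕ) : Function.Injective fun a : K => a ^ p ^ m := by
  intro a b h
  apply (iterateFrobenius K p m).injective
  rwa [iterateFrobenius_def, iterateFrobenius_def]

lemma moore_det_ne_zero {n : ℕ} (z : Fin n → K)
    (hinj : Function.Injective fun m : Fin n → ZMod p => ∑ j : Fin n, (m j).val • z j) :
    (Matrix.of fun k j : Fin n => z j ^ p ^ (n - 1 - (k : ℕ))).det ≠ 0 := by
  classical
  have hp1 : 1 < p := (Fact.out : p.Prime).one_lt
  intro hdet
  obtain ⟨v, hv0, hv⟩ := Matrix.exists_vecMul_eq_zero_iff.mpr hdet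
  have hcol : ∀ j : Fin n, ∑ k : Fin n, v k * z j ^ p ^ (n - 1 - (k : ℕ)) = 0 := by
    intro j
    have := congrFun hv j
    simpa [Matrix.vecMul, dotProduct] using this
  set Q : K[X] := ∑ k : Fin n, C (v k) * X ^ p ^ (n - 1 - (k : ℕ)) with hQdef
  have heval : ∀ m : Fin n → ZMod p, Q.eval (∑ j : Fin n, (m j).val • z j) = 0 := by
    intro m
    have h0 : Q.eval (∑ j : Fin n, (m j).val • z j)
        = ∑ k : Fin n, v k * (∑ j : Fin n, (m j).val • z j) ^ p ^ (n - 1 - (k : ℕ)) := by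
      simp [hQdef, eval_finset_sum]
    rw [h0]
    have hexp : ∀ e : ℕ, (∑ j : Fin n, (m j).val • z j) ^ p ^ e
        = ∑ j : Fin n, ((m j).val : K) * (z j) ^ p ^ e := by
      intro e
      rw [aux_sum_pow]
      refine Finset.sum_congr rfl fun j _ => ?_
      rw [nsmul_eq_mul, mul_pow, aux_cast_pow]
    calc ∑ k : Fin n, v k * (∑ j : Fin n, (m j).val • z j) ^ p ^ (n - 1 - (k : ℕ))
        = ∑ k : Fin n, ∑ j : Fin n, ((m j).val : K) * (v k * z j ^ p ^ (n - 1 - (k : ℕ))) := by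
          refine Finset.sum_congr rfl fun k _ => ?_
          rw [hexp, Finset.mul_sum]
          refine Finset.sum_congr rfl fun j _ => by ring
      _ = ∑ j : Fin n, ((m j).val : K) * (∑ k : Fin n, v k * z j ^ p ^ (n - 1 - (k : ℕ))) := by
          rw [Finset.sum_comm]
          exact Finset.sum_congr rfl fun j _ => (Finset.mul_sum _ _ _).symm
      _ = 0 := by simp [hcol]
  have hcard : Q.natDegree < Fintype.card (Fin n → ZMod p) := by
    have h1 : Q.natDegree ≤ p ^ (n - 1) := by
      refine natDegree_sum_le_of_forall_le _ _ fun k _ => ?_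
      refine (natDegree_C_mul_le _ _).trans ?_
      rw [natDegree_X_pow]
      exact Nat.pow_le_pow_right (by omega) (by omega)
    have h2 : Fintype.card (Fin n → ZMod p) = p ^ n := by
      simp [ZMod.card]
    rw [h2]
    have hkn := (⟨0, Nat.pos_of_ne_zero ?_⟩ : Fin n).isLt
    · exact lt_of_le_of_lt h1 (Nat.pow_lt_pow_right hp1 (by omega))
    · rintro rfl
      exact absurd (Subsingleton.elim _ _) hv0
  have hQ0 : Q = 0 :=
    eq_zero_of_natDegree_lt_card_of_eval_eq_zero Q hinj heval hcard
  obtain ⟨k0, hk0⟩ := Function.ne_iff.mp hv0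
  have hcoeff : Q.coeff (p ^ (n - 1 - (k0 : ℕ))) = v k0 := by
    rw [hQdef, finset_sum_coeff]
    rw [Finset.sum_eq_single k0]
    · rw [coeff_C_mul_X_pow, if_pos rfl]
    · intro k _ hk
      rw [coeff_C_mul_X_pow, if_neg]
      intro h
      have := Nat.pow_right_injective hp1 h
      have hkn := k.isLt
      have hk0n := k0.isLt
      exact hk (Fin.ext (by omega))
    · simp
  rw [hQ0] at hcoeff
  simp at hcoeff
  exact hk0 hcoeff.symm

end Helpers

theorem statement4 {K : Type*} [Field K] [IsAlgClosed K] {p : ℕ} [Fact p.Prime] [CharP K p]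
    {n : ℕ} (hn : 1 ≤ n) (c : Fin (n + 1) → K) (hc0 : c 0 ≠ 0) (hcn : c (Fin.last n) ≠ 0)
    (z : Fin n → K)
    (hbasis : Set.BijOn (fun m : Fin n → ZMod p => ∑ j : Fin n, (m j).val • z j)
      Set.univ {x : K | ∑ i : Fin (n + 1), c i * x ^ p ^ (n - (i : ℕ)) = 0})
    (x : ℕ → K) :
    (∀ k : ℕ, ∑ i : Fin (n + 1), c i * (x (k + (i : ℕ))) ^ p ^ (n - (i : ℕ)) = 0) ↔
      ∃ lam : Fin n → K, ∀ k : ℕ, x k = ∑ j : Fin n, z j * (lam j) ^ p ^ k := by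
  classical
  have hp1 : 1 < p := (Fact.out : p.Prime).one_lt
  haveI : Fact (1 < p) := ⟨hp1⟩
  -- each z j is a root of P
  have hzS : ∀ j : Fin n, ∑ i : Fin (n + 1), c i * (z j) ^ p ^ (n - (i : ℕ)) = 0 := by
    intro j
    have hmem := hbasis.mapsTo (Set.mem_univ (Pi.single j (1 : ZMod p)))
    have hsum : ∑ j' : Fin n, ((Pi.single j (1 : ZMod p) : Fin n → ZMod p) j').val • z j'
        = z j := by
      rw [Finset.sum_eq_single j]
      · simp [ZMod.val_one]
      · intro j' _ hj'
        simp [Pi.single_eq_of_ne hj']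
      · simp
    simp only [Set.mem_setOf_eq] at hmem
    rwa [hsum] at hmem
  -- comb sequences satisfy the recurrence
  have hreccomb : ∀ (lam : Fin n → K) (k : ℕ),
      ∑ i : Fin (n + 1), c i * (∑ j : Fin n, z j * (lam j) ^ p ^ (k + (i : ℕ))) ^
        p ^ (n - (i : ℕ)) = 0 := by
    intro lam k
    calc ∑ i : Fin (n + 1), c i * (∑ j : Fin n, z j * (lam j) ^ p ^ (k + (i : ℕ))) ^
          p ^ (n - (i : ℕ))
        = ∑ i : Fin (n + 1), ∑ j : Fin n,
            (c i * z j ^ p ^ (n - (i : ℕ))) * (lam j) ^ p ^ (k + n) := by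
          refine Finset.sum_congr rfl fun i _ => ?_
          rw [aux_sum_pow, Finset.mul_sum]
          refine Finset.sum_congr rfl fun j _ => ?_
          rw [mul_pow, ← pow_mul, ← pow_add]
          have hi := i.isLt
          have he : k + (i : ℕ) + (n - (i : ℕ)) = k + n := by omega
          rw [he]
          ring
      _ = ∑ j : Fin n,
            (∑ i : Fin (n + 1), c i * z j ^ p ^ (n - (i : ℕ))) * (lam j) ^ p ^ (k + n) := by
          rw [Finset.sum_comm]
          exact Finset.sum_congr rfl fun j _ => (Finset.sum_mul _ _ _).symm
      _ = 0 := by simp [hzS]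
  constructor
  · intro hrec
    have hinj : Function.Injective
        (fun m : Fin n → ZMod p => ∑ j : Fin n, (m j).val • z j) :=
      Set.injOn_univ.mp hbasis.injOn
    set M : Matrix (Fin n) (Fin n) K :=
      Matrix.of fun k j : Fin n => z j ^ p ^ (n - 1 - (k : ℕ)) with hM
    have hdet : M.det ≠ 0 := moore_det_ne_zero z hinj
    set a' : Fin n → K := fun k => (x (k : ℕ)) ^ p ^ (n - 1 - (k : ℕ)) with ha'
    have hMν : M.mulVec (M⁻¹.mulVec a') = a' := by
      rw [Matrix.mulVec_mulVec, Matrix.mul_nonsing_inv _ (isUnit_iff_ne_zero.mpr hdet),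
        Matrix.one_mulVec]
    set ν : Fin n → K := M⁻¹.mulVec a' with hν
    choose lam hlam using fun j =>
      IsAlgClosed.exists_pow_nat_eq (ν j) (n := p ^ (n - 1)) (pow_pos (by omega) _)
    have key1 : ∀ k : Fin n, ∑ j : Fin n, z j * (lam j) ^ p ^ (k : ℕ) = x (k : ℕ) := by
      intro k
      apply aux_pow_inj (K := K) (p := p) (n - 1 - (k : ℕ))
      show (∑ j : Fin n, z j * (lam j) ^ p ^ (k : ℕ)) ^ p ^ (n - 1 - (k : ℕ))
          = (x (k : ℕ)) ^ p ^ (n - 1 - (k : ℕ))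
      rw [aux_sum_pow]
      have hrow := congrFun hMν k
      simp only [Matrix.mulVec, dotProduct, hM, Matrix.of_apply, ha'] at hrow
      calc ∑ j : Fin n, (z j * (lam j) ^ p ^ (k : ℕ)) ^ p ^ (n - 1 - (k : ℕ))
          = ∑ j : Fin n, z j ^ p ^ (n - 1 - (k : ℕ)) * ν j := by
            refine Finset.sum_congr rfl fun j _ => ?_
            rw [mul_pow, ← pow_mul, ← pow_add]
            have hk := k.isLt
            have he : (k : ℕ) + (n - 1 - (k : ℕ)) = n - 1 := by omega
            rw [he, hlam]
        _ = (x (k : ℕ)) ^ p ^ (n - 1 - (k : ℕ)) := hrow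
    refine ⟨lam, fun k => ?_⟩
    induction k using Nat.strong_induction_on with
    | _ k ih =>
      rcases lt_or_ge k n with hk | hk
      · exact (key1 ⟨k, hk⟩).symm
      · obtain ⟨m, rfl⟩ : ∃ m, k = m + n := ⟨k - n, by omega⟩
        have hx := hrec m
        have hy := hreccomb lam m
        rw [Fin.sum_univ_castSucc] at hx hy
        simp only [Fin.val_last, Nat.sub_self, pow_zero, pow_one, Fin.coe_castSucc] at hx hy
        have hAB : ∑ i : Fin n, c i.castSucc * (x (m + (i : ℕ))) ^ p ^ (n - (i : ℕ))
            = ∑ i : Fin n, c i.castSucc *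
                (∑ j : Fin n, z j * (lam j) ^ p ^ (m + (i : ℕ))) ^ p ^ (n - (i : ℕ)) := by
          refine Finset.sum_congr rfl fun i _ => ?_
          have hi := i.isLt
          rw [ih (m + (i : ℕ)) (by omega)]
        rw [hAB] at hx
        exact mul_left_cancel₀ hcn (add_left_cancel (hx.trans hy.symm))
  · rintro ⟨lam, hl⟩ k
    have h := hreccomb lam k
    simp only [hl]
    exact h
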